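/- Consider a finite discounted MDP with state set S, action set A, kernel P, reward r, and discount γ ∈ [0,1), together with a regularizer φ satisfying Assumption 2 and λ ≥ 0. Then for every value function V₀ : S → ℝ, every n ≥ 1, and every state s ∈ S: (Tⁿ V₀) s ≤ (T_λⁿ V₀) s ≤ (Tⁿ V₀) s + λ·φ(1/|A|)·∑_{t=0}^{n−1} γᵗ, where T = T₀ is the unregularized Bellman operator and Tⁿ denotes n-fold application. -/

import Mathlib

open Filter

/-- A regularizer: on the interval (0,1], φ is nonincreasing, φ(1) = 0,
φ is differentiable, and `x ↦ x·φ(x)` is strictly concave. -/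
def IsRegularizer (φ : ℝ → ℝ) : Prop :=
  AntitoneOn φ (Set.Ioc 0 1) ∧ φ 1 = 0 ∧ DifferentiableOn ℝ φ (Set.Ioc 0 1) ∧
    StrictConcaveOn ℝ (Set.Ioc 0 1) (fun x => x * φ x)

/-- Assumption 2: `x·φ(x) → 0` as `x → 0⁺`. -/
def Assumption2 (φ : ℝ → ℝ) : Prop :=
  Tendsto (fun x => x * φ x) (nhdsWithin 0 (Set.Ioi 0)) (nhds 0)

/-- The regularized Bellman operator `T_λ`:
`(T_λ V) s = sup_{p ∈ Δ_A} ∑ a, (p a * (r s a + γ ∑ s', P s a s' * V s') + λ * f_φ(p a))`,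
where `f_φ(x) = x * φ x` (so `f_φ(0) = 0` automatically). -/
noncomputable def Treg {S A : Type*} [Fintype S] [Fintype A]
    (P : S → A → S → ℝ) (r : S → A → ℝ) (γ : ℝ) (φ : ℝ → ℝ) (lam : ℝ)
    (V : S → ℝ) (s : S) : ℝ :=
  sSup ((fun p : A → ℝ =>
      ∑ a, (p a * (r s a + γ * ∑ s', P s a s' * V s') + lam * (p a * φ (p a)))) ''
    {p | (∀ a, 0 ≤ p a) ∧ ∑ a, p a = 1})

section Aux

variable {A : Type*} [Fintype A] [Nonempty A] {φ : ℝ → ℝ}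

lemma simplex_nonempty :
    ({p : A → ℝ | (∀ a, 0 ≤ p a) ∧ ∑ a, p a = 1}).Nonempty := by
  have hm : (0 : ℝ) < Fintype.card A := by
    exact_mod_cast Fintype.card_pos
  refine ⟨fun _ => (Fintype.card A : ℝ)⁻¹, fun a => by positivity, ?_⟩
  simp only [Finset.sum_const, Finset.card_univ, nsmul_eq_mul]
  exact mul_inv_cancel₀ (ne_of_gt hm)

lemma simplex_le_one {p : A → ℝ} (hp0 : ∀ a, 0 ≤ p a) (hp1 : ∑ a, p a = 1)
    (a : A) : p a ≤ 1 := by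
  calc p a ≤ ∑ b, p b := Finset.single_le_sum (fun b _ => hp0 b) (Finset.mem_univ a)
    _ = 1 := hp1

lemma phi_nonneg (hφ : IsRegularizer φ) {x : ℝ} (hx : x ∈ Set.Ioc (0:ℝ) 1) :
    0 ≤ φ x := by
  have h := hφ.1 hx (Set.mem_Ioc.mpr ⟨zero_lt_one, le_refl 1⟩) hx.2
  rw [hφ.2.1] at h
  exact h

lemma entropy_nonneg (hφ : IsRegularizer φ) {p : A → ℝ} (hp0 : ∀ a, 0 ≤ p a)
    (hp1 : ∑ a, p a = 1) : 0 ≤ ∑ a, p a * φ (p a) := by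
  refine Finset.sum_nonneg fun a _ => ?_
  rcases eq_or_lt_of_le (hp0 a) with h | h
  · simp [← h]
  · exact mul_nonneg (hp0 a) (phi_nonneg hφ ⟨h, simplex_le_one hp0 hp1 a⟩)

lemma one_div_card_mem : (1 / (Fintype.card A : ℝ)) ∈ Set.Ioc (0:ℝ) 1 := by
  have hm : (1 : ℝ) ≤ Fintype.card A := by exact_mod_cast Fintype.card_pos
  constructor
  · positivity
  · rw [div_le_one (by linarith)]; exact hm

/-- Jensen-type bound: on the simplex, `∑ a, p a * φ (p a) ≤ φ (1/|A|)`. -/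
lemma jensen_bound (hφ : IsRegularizer φ) {p : A → ℝ} (hp0 : ∀ a, 0 ≤ p a)
    (hp1 : ∑ a, p a = 1) :
    ∑ a, p a * φ (p a) ≤ φ (1 / (Fintype.card A : ℝ)) := by
  classical
  set t := Finset.univ.filter (fun a => 0 < p a) with ht
  have hsum_t : ∑ a ∈ t, p a = 1 := by
    rw [ht, Finset.sum_filter_of_ne, hp1]
    intro a _ h
    exact lt_of_le_of_ne (hp0 a) (Ne.symm h)
  have htne : t.Nonempty := by
    by_contra h
    rw [Finset.not_nonempty_iff_eq_empty] at h
    rw [h, Finset.sum_empty] at hsum_t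
    norm_num at hsum_t
  have hk0 : 0 < (t.card : ℝ) := by exact_mod_cast Finset.card_pos.mpr htne
  have hkm : (t.card : ℝ) ≤ Fintype.card A := by
    exact_mod_cast (Finset.card_le_univ t).trans_eq Finset.card_univ
  have hmem : ∀ a ∈ t, p a ∈ Set.Ioc (0:ℝ) 1 := fun a ha =>
    ⟨(Finset.mem_filter.mp ha).2, simplex_le_one hp0 hp1 a⟩
  have hconc := hφ.2.2.2.concaveOn
  have hw1 : ∑ _a ∈ t, (t.card : ℝ)⁻¹ = 1 := by
    simp only [Finset.sum_const, nsmul_eq_mul]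
    exact mul_inv_cancel₀ (ne_of_gt hk0)
  have hJ := hconc.le_map_sum (t := t) (w := fun _ => (t.card : ℝ)⁻¹) (p := p)
    (fun i _ => by positivity) hw1 hmem
  have hpt : ∑ i ∈ t, (t.card : ℝ)⁻¹ • p i = (t.card : ℝ)⁻¹ := by
    rw [← Finset.smul_sum, hsum_t, smul_eq_mul, mul_one]
  rw [hpt] at hJ
  simp only [smul_eq_mul, ← Finset.mul_sum] at hJ
  have hsum_le : ∑ i ∈ t, p i * φ (p i) ≤ φ (t.card : ℝ)⁻¹ := by
    calc ∑ i ∈ t, p i * φ (p i)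
        = (t.card : ℝ) * ((t.card : ℝ)⁻¹ * ∑ i ∈ t, p i * φ (p i)) := by
          field_simp
      _ ≤ (t.card : ℝ) * ((t.card : ℝ)⁻¹ * φ (t.card : ℝ)⁻¹) :=
          mul_le_mul_of_nonneg_left hJ hk0.le
      _ = φ (t.card : ℝ)⁻¹ := by field_simp
  have hfull : ∑ a, p a * φ (p a) = ∑ a ∈ t, p a * φ (p a) := by
    rw [ht, Finset.sum_filter_of_ne]
    intro a _ h
    rcases eq_or_lt_of_le (hp0 a) with h0 | h0
    · exact absurd (by simp [← h0]) h
    · exact h0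
  have hanti : φ (t.card : ℝ)⁻¹ ≤ φ (1 / (Fintype.card A : ℝ)) := by
    have h1k : (1:ℝ) ≤ t.card := by exact_mod_cast Finset.card_pos.mpr htne
    refine hφ.1 one_div_card_mem ⟨by positivity, inv_le_one_of_one_le₀ h1k⟩ ?_
    rw [one_div]
    exact inv_anti₀ (by positivity) hkm
  rw [hfull]
  exact hsum_le.trans hanti

/-- Splitting the objective. -/
lemma obj_split (lam : ℝ) (Q : A → ℝ) (p : A → ℝ) :
    ∑ a, (p a * Q a + lam * (p a * φ (p a)))
      = (∑ a, p a * Q a) + lam * ∑ a, p a * φ (p a) := by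
  rw [Finset.sum_add_distrib, Finset.mul_sum]

end Aux

section Op

variable {S A : Type*} [Fintype S] [Fintype A] [Nonempty A]
variable {P : S → A → S → ℝ} {r : S → A → ℝ} {γ : ℝ} {φ : ℝ → ℝ} {lam : ℝ}

/-- The image set defining `Treg` is bounded above. -/
lemma treg_bddAbove (hφ : IsRegularizer φ) (hlam : 0 ≤ lam) (V : S → ℝ) (s : S) :
    BddAbove ((fun p : A → ℝ =>
      ∑ a, (p a * (r s a + γ * ∑ s', P s a s' * V s') + lam * (p a * φ (p a)))) ''
    {p | (∀ a, 0 ≤ p a) ∧ ∑ a, p a = 1}) := by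
  set Q : A → ℝ := fun a => r s a + γ * ∑ s', P s a s' * V s' with hQ
  refine ⟨(∑ a, |Q a|) + lam * φ (1 / (Fintype.card A : ℝ)), ?_⟩
  rintro x ⟨p, ⟨hp0, hp1⟩, rfl⟩
  dsimp only
  rw [obj_split]
  refine add_le_add ?_ (mul_le_mul_of_nonneg_left (jensen_bound hφ hp0 hp1) hlam)
  refine Finset.sum_le_sum fun a _ => ?_
  calc p a * Q a ≤ p a * |Q a| :=
        mul_le_mul_of_nonneg_left (le_abs_self _) (hp0 a)
    _ ≤ 1 * |Q a| :=
        mul_le_mul_of_nonneg_right (simplex_le_one hp0 hp1 a) (abs_nonneg _)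
    _ = |Q a| := one_mul _

/-- Unregularized `≤` regularized. -/
lemma treg_zero_le (hφ : IsRegularizer φ) (hlam : 0 ≤ lam) (V : S → ℝ) (s : S) :
    Treg P r γ φ 0 V s ≤ Treg P r γ φ lam V s := by
  refine csSup_le (simplex_nonempty.image _) ?_
  rintro x ⟨p, hp, rfl⟩
  refine le_trans ?_ (le_csSup (treg_bddAbove hφ hlam V s) ⟨p, hp, rfl⟩)
  dsimp only
  rw [obj_split, obj_split]
  simp only [zero_mul, add_zero]
  nlinarith [entropy_nonneg hφ hp.1 hp.2]

/-- Regularized `≤` unregularized plus `λ φ(1/|A|)`. -/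
lemma treg_le_zero_add (hφ : IsRegularizer φ) (hlam : 0 ≤ lam) (V : S → ℝ) (s : S) :
    Treg P r γ φ lam V s ≤ Treg P r γ φ 0 V s + lam * φ (1 / (Fintype.card A : ℝ)) := by
  refine csSup_le (simplex_nonempty.image _) ?_
  rintro x ⟨p, hp, rfl⟩
  have h1 : (fun p : A → ℝ => ∑ a, (p a * (r s a + γ * ∑ s', P s a s' * V s')
      + (0:ℝ) * (p a * φ (p a)))) p ≤ Treg P r γ φ 0 V s :=
    le_csSup (treg_bddAbove hφ le_rfl V s) ⟨p, hp, rfl⟩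
  dsimp only at h1 ⊢
  rw [obj_split] at h1 ⊢
  simp only [zero_mul, add_zero] at h1
  have h2 : lam * ∑ a, p a * φ (p a) ≤ lam * φ (1 / (Fintype.card A : ℝ)) :=
    mul_le_mul_of_nonneg_left (jensen_bound hφ hp.1 hp.2) hlam
  linarith

/-- Monotonicity of `Treg` in the value function. -/
lemma treg_mono (hφ : IsRegularizer φ) (hlam : 0 ≤ lam)
    (hP : ∀ s a s', 0 ≤ P s a s') (hγ0 : 0 ≤ γ)
    {V W : S → ℝ} (hVW : ∀ s, V s ≤ W s) (s : S) :
    Treg P r γ φ lam V s ≤ Treg P r γ φ lam W s := by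
  refine csSup_le (simplex_nonempty.image _) ?_
  rintro x ⟨p, hp, rfl⟩
  refine le_trans ?_ (le_csSup (treg_bddAbove hφ hlam W s) ⟨p, hp, rfl⟩)
  dsimp only
  refine Finset.sum_le_sum fun a _ => ?_
  have hsum : ∑ s', P s a s' * V s' ≤ ∑ s', P s a s' * W s' :=
    Finset.sum_le_sum fun s' _ => mul_le_mul_of_nonneg_left (hVW s') (hP s a s')
  have hQ : r s a + γ * ∑ s', P s a s' * V s' ≤ r s a + γ * ∑ s', P s a s' * W s' := by
    have := mul_le_mul_of_nonneg_left hsum hγ0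
    linarith
  exact add_le_add (mul_le_mul_of_nonneg_left hQ (hp.1 a)) le_rfl

/-- Shifting the value function by a constant shifts `Treg` by at most `γ c`. -/
lemma treg_shift_le (hφ : IsRegularizer φ) (hlam : 0 ≤ lam)
    (hPsum : ∀ s a, ∑ s', P s a s' = 1) (V : S → ℝ) (c : ℝ) (s : S) :
    Treg P r γ φ lam (fun s' => V s' + c) s ≤ Treg P r γ φ lam V s + γ * c := by
  refine csSup_le (simplex_nonempty.image _) ?_
  rintro x ⟨p, hp, rfl⟩
  have key : ∀ a : A, r s a + γ * ∑ s', P s a s' * (V s' + c)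
      = (r s a + γ * ∑ s', P s a s' * V s') + γ * c := by
    intro a
    have : ∑ s', P s a s' * (V s' + c) = (∑ s', P s a s' * V s') + c := by
      simp only [mul_add, Finset.sum_add_distrib, ← Finset.sum_mul, hPsum s a, one_mul]
    rw [this]; ring
  have heq : ∑ a, (p a * (r s a + γ * ∑ s', P s a s' * (V s' + c))
        + lam * (p a * φ (p a)))
      = (∑ a, (p a * (r s a + γ * ∑ s', P s a s' * V s') + lam * (p a * φ (p a))))
        + γ * c := by
    have h2 : ∑ a, p a * (γ * c) = γ * c := by
      rw [← Finset.sum_mul, hp.2, one_mul]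
    calc ∑ a, (p a * (r s a + γ * ∑ s', P s a s' * (V s' + c)) + lam * (p a * φ (p a)))
        = ∑ a, ((p a * (r s a + γ * ∑ s', P s a s' * V s') + lam * (p a * φ (p a)))
            + p a * (γ * c)) := by
          refine Finset.sum_congr rfl fun a _ => ?_
          rw [key a]; ring
      _ = _ := by rw [Finset.sum_add_distrib, h2]
  dsimp only
  rw [heq]
  exact add_le_add_left (le_csSup (treg_bddAbove hφ hlam V s) ⟨p, hp, rfl⟩) _

end Op

/-- Sandwich bound for the iterates of the regularized Bellman operator:
`Tⁿ V₀ s ≤ T_λⁿ V₀ s ≤ Tⁿ V₀ s + λ·φ(1/|A|)·∑_{t<n} γᵗ` for every `n ≥ 1`. -/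
theorem Treg_iterate_bounds (S A : Type*) [Fintype S] [Fintype A] [Nonempty S] [Nonempty A]
    (P : S → A → S → ℝ) (hP : ∀ s a s', 0 ≤ P s a s')
    (hPsum : ∀ s a, ∑ s', P s a s' = 1)
    (r : S → A → ℝ) (γ : ℝ) (hγ0 : 0 ≤ γ) (hγ1 : γ < 1)
    (φ : ℝ → ℝ) (hφ : IsRegularizer φ) (hA2 : Assumption2 φ)
    (lam : ℝ) (hlam : 0 ≤ lam) (V₀ : S → ℝ) (n : ℕ) (hn : 1 ≤ n) (s : S) :
    (Treg P r γ φ 0)^[n] V₀ s ≤ (Treg P r γ φ lam)^[n] V₀ s ∧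
      (Treg P r γ φ lam)^[n] V₀ s ≤ (Treg P r γ φ 0)^[n] V₀ s +
        lam * φ (1 / (Fintype.card A : ℝ)) * ∑ t ∈ Finset.range n, γ ^ t := by
  clear hn
  set κ := lam * φ (1 / (Fintype.card A : ℝ)) with hκ
  have hκ0 : 0 ≤ κ := mul_nonneg hlam (phi_nonneg hφ one_div_card_mem)
  suffices h : ∀ m : ℕ, ∀ s : S, (Treg P r γ φ 0)^[m] V₀ s ≤ (Treg P r γ φ lam)^[m] V₀ s ∧
      (Treg P r γ φ lam)^[m] V₀ s ≤ (Treg P r γ φ 0)^[m] V₀ s +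
        κ * ∑ t ∈ Finset.range m, γ ^ t from h n s
  intro m
  induction m with
  | zero => intro s; simp
  | succ n ih =>
    intro s
    have ihl : ∀ s, (Treg P r γ φ 0)^[n] V₀ s ≤ (Treg P r γ φ lam)^[n] V₀ s :=
      fun s => (ih s).1
    have ihr : ∀ s, (Treg P r γ φ lam)^[n] V₀ s ≤
        (Treg P r γ φ 0)^[n] V₀ s + κ * ∑ t ∈ Finset.range n, γ ^ t :=
      fun s => (ih s).2
    rw [Function.iterate_succ_apply', Function.iterate_succ_apply']
    constructor
    · calc Treg P r γ φ 0 ((Treg P r γ φ 0)^[n] V₀) s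
          ≤ Treg P r γ φ 0 ((Treg P r γ φ lam)^[n] V₀) s :=
            treg_mono hφ le_rfl hP hγ0 ihl s
        _ ≤ Treg P r γ φ lam ((Treg P r γ φ lam)^[n] V₀) s :=
            treg_zero_le hφ hlam _ s
    · calc Treg P r γ φ lam ((Treg P r γ φ lam)^[n] V₀) s
          ≤ Treg P r γ φ 0 ((Treg P r γ φ lam)^[n] V₀) s + κ :=
            treg_le_zero_add hφ hlam _ s
        _ ≤ Treg P r γ φ 0
              (fun s' => (Treg P r γ φ 0)^[n] V₀ s' + κ * ∑ t ∈ Finset.range n, γ ^ t) s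
              + κ :=
            add_le_add_left (treg_mono hφ le_rfl hP hγ0 ihr s) _
        _ ≤ (Treg P r γ φ 0 ((Treg P r γ φ 0)^[n] V₀) s
              + γ * (κ * ∑ t ∈ Finset.range n, γ ^ t)) + κ :=
            add_le_add_left (treg_shift_le hφ le_rfl hPsum _ _ s) _
        _ = Treg P r γ φ 0 ((Treg P r γ φ 0)^[n] V₀) s
              + κ * ∑ t ∈ Finset.range (n + 1), γ ^ t := by
            rw [geom_sum_succ]; ring
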